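/- In a directed graph (tournament) G with source s and sink t, if two distinct s-t paths P1 and P2 have the same sequence of trackers with respect to a vertex set T, then G contains a monotone cycle: two internally vertex-disjoint directed paths from some vertex u to some vertex v, with no internal vertex of either path contained in T. -/

import Mathlib

noncomputable def trackSeq {V : Type} (T : Set V) (l : List V) : List V :=
  l.filter (fun v => @decide (v ∈ T) (Classical.propDecidable _))

/-- A directed walk from `s` to `t` in the digraph given by the arc relation `A`,
recorded as its list of vertices. -/
def IsDiwalk {V : Type} (A : V → V → Prop) (s t : V) (l : List V) : Prop :=
  l ≠ [] ∧ l.Chain' A ∧ l.head? = some s ∧ l.getLast? = some t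

/-- A simple directed path from `s` to `t`. -/
def IsDipath {V : Type} (A : V → V → Prop) (s t : V) (l : List V) : Prop :=
  IsDiwalk A s t l ∧ l.Nodup

/-- A tournament: no self-loops and exactly one arc between any two distinct vertices. -/
def IsTournament {V : Type} (A : V → V → Prop) : Prop :=
  (∀ v, ¬ A v v) ∧ (∀ u v : V, u ≠ v → (A u v ↔ ¬ A v u))

/-- The walk `l` uses the arc `(a, b)`. -/
def ArcIn {V : Type} (a b : V) (l : List V) : Prop :=
  ∃ l1 l2 : List V, l = l1 ++ a :: b :: l2

/-- `T` is a tracking set for directed `s`-`t` paths. -/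
def IsDiTrackingSet {V : Type} (A : V → V → Prop) (s t : V) (T : Set V) : Prop :=
  ∀ p q : List V, IsDipath A s t p → IsDipath A s t q →
    trackSeq T p = trackSeq T q → p = q

section Aux

variable {V : Type}

lemma trackSeq_append (T : Set V) (l1 l2 : List V) :
    trackSeq T (l1 ++ l2) = trackSeq T l1 ++ trackSeq T l2 := by
  simp [trackSeq]

lemma trackSeq_cons_mem (T : Set V) {a : V} (l : List V) (h : a ∈ T) :
    trackSeq T (a :: l) = a :: trackSeq T l := by
  simp [trackSeq, List.filter_cons, h]

lemma trackSeq_cons_not_mem (T : Set V) {a : V} (l : List V) (h : a ∉ T) :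
    trackSeq T (a :: l) = trackSeq T l := by
  simp [trackSeq, List.filter_cons, h]

lemma trackSeq_nil_of (T : Set V) (l : List V) (h : ∀ x ∈ l, x ∉ T) :
    trackSeq T l = [] := by
  apply List.filter_eq_nil_iff.mpr
  intro a ha
  simp [h a ha]

lemma mem_of_trackSeq_nil (T : Set V) (l : List V) (h : trackSeq T l = [])
    {x : V} (hx : x ∈ l) : x ∉ T := by
  have := List.filter_eq_nil_iff.mp h x hx
  simpa using this

lemma split_first (P : V → Prop) :
    ∀ l : List V, (∃ x ∈ l, P x) →
      ∃ p v s, l = p ++ v :: s ∧ P v ∧ ∀ x ∈ p, ¬ P x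
  | [], h => by simp at h
  | a :: l, h => by
    by_cases ha : P a
    · exact ⟨[], a, l, rfl, ha, by simp⟩
    · obtain ⟨x, hx, hPx⟩ := h
      rcases List.mem_cons.mp hx with rfl | hx
      · exact absurd hPx ha
      · obtain ⟨p, v, s, e, hv, hp⟩ := split_first P l ⟨x, hx, hPx⟩
        refine ⟨a :: p, v, s, by simp [e], hv, ?_⟩
        rintro y hy
        rcases List.mem_cons.mp hy with rfl | hy
        · exact ha
        · exact hp y hy

lemma diverge : ∀ p q : List V, p ≠ q → p.head? = q.head? →
    ∃ c u l1 l2, p = c ++ u :: l1 ∧ q = c ++ u :: l2 ∧ l1.head? ≠ l2.head?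
  | [], [], hne, _ => absurd rfl hne
  | [], b :: q, _, hh => by simp at hh
  | a :: p, [], _, hh => by simp at hh
  | a :: p, b :: q, hne, hh => by
    have hab : a = b := by simpa using hh
    subst hab
    by_cases h : p.head? = q.head?
    · have hpq : p ≠ q := fun e => hne (by rw [e])
      obtain ⟨c, u, l1, l2, e1, e2, hne'⟩ := diverge p q hpq h
      exact ⟨a :: c, u, l1, l2, by simp [e1], by simp [e2], hne'⟩
    · exact ⟨[], a, p, q, rfl, rfl, h⟩

lemma head?_append_cons (b : List V) (c : V) (s : List V) :
    (b ++ [c]).head? = (b ++ c :: s).head? := by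
  cases b <;> simp

/-- Crossing lemma: two paths from `u` to `w` that diverge at the very first step
contain two internally disjoint paths from `u` to a common vertex `v`. -/
lemma crossing (A : V → V → Prop) (u w : V) (l1 l2 : List V)
    (h1 : IsDipath A u w (u :: l1)) (h2 : IsDipath A u w (u :: l2))
    (hh : l1.head? ≠ l2.head?) :
    ∃ v, u ≠ v ∧ ∃ Q1 Q2 : List V,
      IsDipath A u v Q1 ∧ IsDipath A u v Q2 ∧ Q1 ≠ Q2 ∧
      (∀ x ∈ Q1.tail.dropLast, x ∉ Q2.tail.dropLast) ∧
      (∀ x ∈ Q1.tail.dropLast, x ∈ l1.dropLast) ∧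
      (∀ x ∈ Q2.tail.dropLast, x ∈ l2.dropLast) := by
  obtain ⟨⟨-, c1, hd1, lst1⟩, nd1⟩ := h1
  obtain ⟨⟨-, c2, hd2, lst2⟩, nd2⟩ := h2
  -- both lists are nonempty
  have hne1 : l1 ≠ [] := by
    rintro rfl
    have hw : u = w := by simpa using lst1
    subst hw
    rcases l2 with _ | ⟨y, l2'⟩
    · exact hh rfl
    · have hm : u ∈ y :: l2' := by
        apply List.mem_of_getLast?
        simpa [List.getLast?_cons_cons] using lst2
      exact (List.nodup_cons.mp nd2).1 hm
  have hne2 : l2 ≠ [] := by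
    rintro rfl
    have hw : u = w := by simpa using lst2
    subst hw
    rcases l1 with _ | ⟨y, l1'⟩
    · exact hh rfl
    · have hm : u ∈ y :: l1' := by
        apply List.mem_of_getLast?
        simpa [List.getLast?_cons_cons] using lst1
      exact (List.nodup_cons.mp nd1).1 hm
  -- w belongs to both l1 and l2
  have hw1 : w ∈ l1 := by
    apply List.mem_of_getLast?
    rcases l1 with _ | ⟨y, l1'⟩
    · exact absurd rfl hne1
    · simpa [List.getLast?_cons_cons] using lst1
  have hw2 : w ∈ l2 := by
    apply List.mem_of_getLast?
    rcases l2 with _ | ⟨y, l2'⟩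
    · exact absurd rfl hne2
    · simpa [List.getLast?_cons_cons] using lst2
  -- split l1 at the first vertex lying on l2
  obtain ⟨p1, v, s1, e1, hv2, hp1⟩ := split_first (· ∈ l2) l1 ⟨w, hw1, hw2⟩
  obtain ⟨p2, v', s2, e2, rfl, -⟩ := split_first (· = v) l2 ⟨v, hv2, rfl⟩
  refine ⟨v', ?_, u :: (p1 ++ [v']), u :: (p2 ++ [v']), ?_, ?_, ?_, ?_, ?_, ?_⟩
  · -- u ≠ v'
    have hul1 : u ∉ l1 := (List.nodup_cons.mp nd1).1
    intro h; subst h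
    exact hul1 (e1 ▸ (by simp))
  · -- Q1 is a dipath
    have hpre : (u :: (p1 ++ [v'])) <+: (u :: l1) := by
      refine ⟨s1, ?_⟩
      simp [e1]
    refine ⟨⟨by simp, c1.prefix hpre, rfl, ?_⟩, nd1.sublist hpre.sublist⟩
    have h' : u :: (p1 ++ [v']) = (u :: p1) ++ [v'] := by simp
    rw [h', List.getLast?_concat]
  · -- Q2 is a dipath
    have hpre : (u :: (p2 ++ [v'])) <+: (u :: l2) := by
      refine ⟨s2, ?_⟩
      simp [e2]
    refine ⟨⟨by simp, c2.prefix hpre, rfl, ?_⟩, nd2.sublist hpre.sublist⟩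
    have h' : u :: (p2 ++ [v']) = (u :: p2) ++ [v'] := by simp
    rw [h', List.getLast?_concat]
  · -- Q1 ≠ Q2
    intro hEq
    have htl : (p1 ++ [v']).head? = (p2 ++ [v']).head? := by
      have h' := congrArg List.tail hEq
      simpa using congrArg List.head? h'
    apply hh
    rw [e1, e2, ← head?_append_cons p1 v' s1, ← head?_append_cons p2 v' s2]
    exact htl
  · -- disjointness of interiors
    intro x hx hx2
    simp only [List.tail_cons, List.dropLast_concat] at hx hx2
    have hxl2 : x ∈ l2 := by
      rw [e2]; exact List.mem_append.mpr (Or.inl hx2)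
    exact hp1 x hx hxl2
  · intro x hx
    simp only [List.tail_cons, List.dropLast_concat] at hx
    rw [e1, List.dropLast_append_of_ne_nil (by simp)]
    exact List.mem_append.mpr (Or.inl hx)
  · intro x hx
    simp only [List.tail_cons, List.dropLast_concat] at hx
    rw [e2, List.dropLast_append_of_ne_nil (by simp)]
    exact List.mem_append.mpr (Or.inl hx)

end Aux

theorem stmt5 {V : Type} [Fintype V] (A : V → V → Prop) (hirr : ∀ v, ¬ A v v)
    (s t : V) (T : Set V) (P1 P2 : List V)
    (h1 : IsDipath A s t P1) (h2 : IsDipath A s t P2) (hne : P1 ≠ P2)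
    (hseq : trackSeq T P1 = trackSeq T P2) :
    ∃ u v : V, u ≠ v ∧ ∃ Q1 Q2 : List V,
      IsDipath A u v Q1 ∧ IsDipath A u v Q2 ∧ Q1 ≠ Q2 ∧
      (∀ x ∈ Q1.tail.dropLast, x ∉ Q2.tail.dropLast) ∧
      (∀ x ∈ Q1.tail.dropLast, x ∉ T) ∧
      (∀ x ∈ Q2.tail.dropLast, x ∉ T) := by
  have hs1 : P1.head? = some s := h1.1.2.2.1
  have hs2 : P2.head? = some s := h2.1.2.2.1
  obtain ⟨pre, u, l1, l2, e1, e2, hh⟩ := diverge P1 P2 hne (hs1.trans hs2.symm)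
  have S1 : IsDipath A u t (u :: l1) := by
    obtain ⟨⟨-, c1, -, lst1⟩, nd1⟩ := h1
    rw [e1] at c1 lst1 nd1
    refine ⟨⟨by simp, c1.suffix ⟨pre, rfl⟩, rfl, ?_⟩,
      nd1.sublist (List.sublist_append_right _ _)⟩
    rwa [List.getLast?_append_of_ne_nil _ (by simp)] at lst1
  have S2 : IsDipath A u t (u :: l2) := by
    obtain ⟨⟨-, c2, -, lst2⟩, nd2⟩ := h2
    rw [e2] at c2 lst2 nd2
    refine ⟨⟨by simp, c2.suffix ⟨pre, rfl⟩, rfl, ?_⟩,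
      nd2.sublist (List.sublist_append_right _ _)⟩
    rwa [List.getLast?_append_of_ne_nil _ (by simp)] at lst2
  have hseq' : trackSeq T (u :: l1) = trackSeq T (u :: l2) := by
    rw [e1, e2, trackSeq_append, trackSeq_append] at hseq
    exact List.append_cancel_left hseq
  have hseq2 : trackSeq T l1 = trackSeq T l2 := by
    by_cases hu : u ∈ T
    · rw [trackSeq_cons_mem _ _ hu, trackSeq_cons_mem _ _ hu] at hseq'
      simpa using hseq'
    · rwa [trackSeq_cons_not_mem _ _ hu, trackSeq_cons_not_mem _ _ hu] at hseq'
  rcases hLs : trackSeq T l1 with _ | ⟨c, rest⟩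
  · -- no trackers after the divergence point: use the full suffixes
    have hL2 : trackSeq T l2 = [] := by rw [← hseq2, hLs]
    obtain ⟨v, huv, Q1, Q2, q1, q2, qne, dis, i1, i2⟩ := crossing A u t l1 l2 S1 S2 hh
    refine ⟨u, v, huv, Q1, Q2, q1, q2, qne, dis, ?_, ?_⟩
    · intro x hx
      exact mem_of_trackSeq_nil T l1 hLs (List.mem_of_mem_dropLast (i1 x hx))
    · intro x hx
      exact mem_of_trackSeq_nil T l2 hL2 (List.mem_of_mem_dropLast (i2 x hx))
  · -- `c` is the first tracker on both suffixes: cut there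
    have hL2 : trackSeq T l2 = c :: rest := by rw [← hseq2, hLs]
    have hc1 : ∃ x ∈ l1, x ∈ T := by
      have hmem : c ∈ trackSeq T l1 := by rw [hLs]; simp
      have := List.mem_filter.mp hmem
      exact ⟨c, this.1, by simpa using this.2⟩
    have hc2 : ∃ x ∈ l2, x ∈ T := by
      have hmem : c ∈ trackSeq T l2 := by rw [hL2]; simp
      have := List.mem_filter.mp hmem
      exact ⟨c, this.1, by simpa using this.2⟩
    obtain ⟨b1, y1, s1, f1, hy1, hb1⟩ := split_first (· ∈ T) l1 hc1
    obtain ⟨b2, y2, s2, f2, hy2, hb2⟩ := split_first (· ∈ T) l2 hc2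
    have g1 : trackSeq T l1 = y1 :: trackSeq T s1 := by
      rw [f1, trackSeq_append, trackSeq_nil_of T b1 hb1, trackSeq_cons_mem _ _ hy1]
      simp
    have g2 : trackSeq T l2 = y2 :: trackSeq T s2 := by
      rw [f2, trackSeq_append, trackSeq_nil_of T b2 hb2, trackSeq_cons_mem _ _ hy2]
      simp
    have hy1c : y1 = c := by rw [hLs] at g1; exact (List.cons.injEq _ _ _ _ ▸ g1.symm).1
    have hy2c : y2 = c := by rw [hL2] at g2; exact (List.cons.injEq _ _ _ _ ▸ g2.symm).1
    rw [hy1c] at f1 hy1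
    rw [hy2c] at f2
    have R1 : IsDipath A u c (u :: (b1 ++ [c])) := by
      obtain ⟨⟨-, c1, -, -⟩, nd1⟩ := S1
      have hpre : (u :: (b1 ++ [c])) <+: (u :: l1) := ⟨s1, by simp [f1]⟩
      refine ⟨⟨by simp, c1.prefix hpre, rfl, ?_⟩, nd1.sublist hpre.sublist⟩
      have h' : u :: (b1 ++ [c]) = (u :: b1) ++ [c] := by simp
      rw [h', List.getLast?_concat]
    have R2 : IsDipath A u c (u :: (b2 ++ [c])) := by
      obtain ⟨⟨-, c2, -, -⟩, nd2⟩ := S2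
      have hpre : (u :: (b2 ++ [c])) <+: (u :: l2) := ⟨s2, by simp [f2]⟩
      refine ⟨⟨by simp, c2.prefix hpre, rfl, ?_⟩, nd2.sublist hpre.sublist⟩
      have h' : u :: (b2 ++ [c]) = (u :: b2) ++ [c] := by simp
      rw [h', List.getLast?_concat]
    have hh' : (b1 ++ [c]).head? ≠ (b2 ++ [c]).head? := by
      rw [head?_append_cons b1 c s1, head?_append_cons b2 c s2, ← f1, ← f2]
      exact hh
    obtain ⟨v, huv, Q1, Q2, q1, q2, qne, dis, i1, i2⟩ :=
      crossing A u c (b1 ++ [c]) (b2 ++ [c]) R1 R2 hh'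
    refine ⟨u, v, huv, Q1, Q2, q1, q2, qne, dis, ?_, ?_⟩
    · intro x hx
      have := i1 x hx
      rw [List.dropLast_concat] at this
      exact hb1 x this
    · intro x hx
      have := i2 x hx
      rw [List.dropLast_concat] at this
      exact hb2 x this
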